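/- Let 2 ≤ j < k ≤ n with 2j ≥ k+1, and let A = R^{j,k}. Let T be a set of k-element subsets of {1,…,n} (with T^c the set of all remaining k-element subsets) admitting a partition T = T₁ ∪ T₂ ∪ ⋯ ∪ T_m with |T_i| ≤ K for all i, such that any two distinct sets in the same block T_i intersect in at most r elements, and any two sets in different blocks intersect in at most 2j−k−1 elements. If (K−1)·C(r,j)/C(k,j) < 1/4 and (C(k−1,j) + (K−1)·C(⌊(k+r)/2⌋, j))/C(k,j) ≤ 3/4, then A_T^*A_T is invertible and the irrepresentable condition holds: ‖A_{T^c}^* A_T (A_T^*A_T)^{−1}‖_∞ < 1. -/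

import Mathlib

open scoped Classical
open Finset Matrix

noncomputable section

/-- The normalized Radon matrix `R^{j,k}`: rows are indexed by `j`-element subsets of
`{1,…,n}`, columns by `k`-element subsets, with entry `1/√(C(k,j))` if the row set is
contained in the column set and `0` otherwise. -/
def radon (n j k : ℕ) :
    Matrix {σ : Finset (Fin n) // σ.card = j} {τ : Finset (Fin n) // τ.card = k} ℝ :=
  fun σ τ => if σ.1 ⊆ τ.1 then 1 / Real.sqrt (k.choose j) else 0

/-- The submatrix of `A` consisting of the columns indexed by `T`. -/
def colSub {m p R : Type*} (A : Matrix m p R) (T : Finset p) :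
    Matrix m {x // x ∈ T} R :=
  fun i t => A i t.1

/-- Maximum absolute row sum of a matrix, `‖M‖_∞`. -/
def matInfNorm {m p : Type*} [Fintype p] (M : Matrix m p ℝ) : ℝ :=
  ⨆ i, ∑ j, |M i j|

/-- Maximum absolute column sum of a matrix, `‖M‖₁`. -/
def matOneNorm {m p : Type*} [Fintype m] (M : Matrix m p ℝ) : ℝ :=
  ⨆ j, ∑ i, |M i j|

/-- `ℓ¹` norm of a vector. -/
def vecOneNorm {m : Type*} [Fintype m] (u : m → ℝ) : ℝ := ∑ i, |u i|

/-- `ℓ^∞` norm of a vector. -/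
def vecInfNorm {m : Type*} (u : m → ℝ) : ℝ := ⨆ i, |u i|

attribute [local instance] Matrix.linftyOpNormedAddCommGroup Matrix.linftyOpNormedRing

local instance matCompl {m' : Type*} [Fintype m'] [DecidableEq m'] :
    CompleteSpace (Matrix m' m' ℝ) :=
  inferInstanceAs (CompleteSpace (m' → m' → ℝ))

lemma linfty_norm_le {m p : Type*} [Fintype m] [Fintype p] (M : Matrix m p ℝ) {C : ℝ}
    (hC : 0 ≤ C) (h : ∀ i, ∑ j, |M i j| ≤ C) : ‖M‖ ≤ C := by
  rw [Matrix.linfty_opNorm_def]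
  have : (Finset.univ.sup fun i : m => ∑ j, ‖M i j‖₊) ≤ C.toNNReal := by
    refine Finset.sup_le fun i _ => ?_
    rw [← NNReal.coe_le_coe, Real.coe_toNNReal _ hC, NNReal.coe_sum]
    simpa [Real.norm_eq_abs] using h i
  calc ((Finset.univ.sup fun i : m => ∑ j, ‖M i j‖₊ : NNReal) : ℝ)
      ≤ (C.toNNReal : ℝ) := by exact_mod_cast this
    _ = C := Real.coe_toNNReal _ hC

lemma matInfNorm_le_norm {m p : Type*} [Fintype m] [Fintype p] (M : Matrix m p ℝ) :
    matInfNorm M ≤ ‖M‖ := by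
  refine Real.iSup_le (fun i => ?_) (norm_nonneg _)
  rw [Matrix.linfty_opNorm_def]
  have : (∑ j, ‖M i j‖₊) ≤ Finset.univ.sup fun i : m => ∑ j, ‖M i j‖₊ :=
    Finset.le_sup (f := fun i : m => ∑ j, ‖M i j‖₊) (Finset.mem_univ i)
  calc (∑ j, |M i j|) = ((∑ j, ‖M i j‖₊ : NNReal) : ℝ) := by
        simp [NNReal.coe_sum, Real.norm_eq_abs]
    _ ≤ _ := by exact_mod_cast this

lemma card_filter_subset (n j : ℕ) (s : Finset (Fin n)) :
    (Finset.univ.filter fun σ : {σ : Finset (Fin n) // σ.card = j} => σ.1 ⊆ s).card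
      = s.card.choose j := by
  rw [← Finset.card_powersetCard j s]
  apply Finset.card_bij (fun σ _ => σ.1)
  · intro σ hσ
    simp only [Finset.mem_filter] at hσ
    simp [Finset.mem_powersetCard, hσ.2, σ.2]
  · intro a _ b _ h; exact Subtype.ext h
  · intro t ht
    rw [Finset.mem_powersetCard] at ht
    exact ⟨⟨t, ht.2⟩, by simp [ht.1], rfl⟩

lemma radon_dot (n j k : ℕ) (hjk : j ≤ k) (τ₁ τ₂ : {τ : Finset (Fin n) // τ.card = k}) :
    ∑ σ, radon n j k σ τ₁ * radon n j k σ τ₂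
      = (((τ₁.1 ∩ τ₂.1).card.choose j : ℝ)) / (k.choose j : ℝ) := by
  have hC : (0:ℝ) < (k.choose j : ℝ) := by exact_mod_cast Nat.choose_pos hjk
  have step : ∀ σ : {σ : Finset (Fin n) // σ.card = j},
      radon n j k σ τ₁ * radon n j k σ τ₂
        = if σ.1 ⊆ τ₁.1 ∩ τ₂.1 then 1 / (k.choose j : ℝ) else 0 := by
    intro σ
    unfold radon
    have hsq : (1 / Real.sqrt (k.choose j)) * (1 / Real.sqrt (k.choose j))
        = 1 / (k.choose j : ℝ) := by
      rw [div_mul_div_comm, one_mul, Real.mul_self_sqrt hC.le]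
    by_cases h1 : σ.1 ⊆ τ₁.1 <;> by_cases h2 : σ.1 ⊆ τ₂.1 <;>
      simp only [h1, h2, if_true, if_false, Finset.subset_inter_iff, and_true, true_and,
        mul_zero, zero_mul, hsq, and_false, false_and]
  rw [Finset.sum_congr rfl fun σ _ => step σ, ← Finset.sum_filter,
    Finset.sum_const, card_filter_subset, nsmul_eq_mul, mul_one_div]

/-- partitioned overlap condition for the irrepresentable condition.
`T` is partitioned (via the block-assignment map `c`) into blocks of size at most `K`;
same-block overlaps are at most `r`, different-block overlaps at most `2j-k-1`.
Under the two numeric conditions, `A_T^*A_T` is invertible and IRR holds. -/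
theorem stmt10 (n j k m K r : ℕ) (hj : 2 ≤ j) (hjk : j < k) (hk : k ≤ n)
    (h2j : k + 1 ≤ 2 * j)
    (T : Finset {τ : Finset (Fin n) // τ.card = k})
    (c : {τ : Finset (Fin n) // τ.card = k} → Fin m)
    (hK : ∀ i : Fin m, (T.filter (fun τ => c τ = i)).card ≤ K)
    (hsame : ∀ τ₁ ∈ T, ∀ τ₂ ∈ T, τ₁ ≠ τ₂ → c τ₁ = c τ₂ → (τ₁.1 ∩ τ₂.1).card ≤ r)
    (hdiff : ∀ τ₁ ∈ T, ∀ τ₂ ∈ T, c τ₁ ≠ c τ₂ → (τ₁.1 ∩ τ₂.1).card ≤ 2 * j - k - 1)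
    (hc1 : ((K : ℝ) - 1) * (r.choose j : ℝ) / (k.choose j : ℝ) < 1 / 4)
    (hc2 : (((k - 1).choose j : ℝ) + ((K : ℝ) - 1) * ((((k + r) / 2).choose j : ℝ))) /
        (k.choose j : ℝ) ≤ 3 / 4) :
    IsUnit ((colSub (radon n j k) T)ᵀ * colSub (radon n j k) T) ∧
    matInfNorm ((colSub (radon n j k) Tᶜ)ᵀ * colSub (radon n j k) T *
      (((colSub (radon n j k) T)ᵀ * colSub (radon n j k) T)⁻¹)) < 1 := by
  classical
  have hjk' : j ≤ k := hjk.le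
  have hC : (0:ℝ) < (k.choose j : ℝ) := by exact_mod_cast Nat.choose_pos hjk'
  set A := radon n j k with hA
  set G := (colSub A T)ᵀ * colSub A T with hG
  set B := (colSub A Tᶜ)ᵀ * colSub A T with hB
  have hGentry : ∀ t₁ t₂ : {x // x ∈ T},
      G t₁ t₂ = ((t₁.1.1 ∩ t₂.1.1).card.choose j : ℝ) / (k.choose j : ℝ) := by
    intro t₁ t₂
    rw [hG]
    simp only [Matrix.mul_apply, Matrix.transpose_apply, colSub, hA]
    exact radon_dot n j k hjk' t₁.1 t₂.1
  have hBentry : ∀ (t₁ : {x // x ∈ Tᶜ}) (t₂ : {x // x ∈ T}),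
      B t₁ t₂ = ((t₁.1.1 ∩ t₂.1.1).card.choose j : ℝ) / (k.choose j : ℝ) := by
    intro t₁ t₂
    rw [hB]
    simp only [Matrix.mul_apply, Matrix.transpose_apply, colSub, hA]
    exact radon_dot n j k hjk' t₁.1 t₂.1
  have hGdiag : ∀ t : {x // x ∈ T}, G t t = 1 := by
    intro t
    rw [hGentry, Finset.inter_self, t.1.2, div_self hC.ne']
  -- helper: pairwise intersection-count inequality
  have hpair : ∀ (τ : Finset (Fin n)), τ.card = k →
      ∀ (s₁ s₂ : Finset (Fin n)),
      (τ ∩ s₁).card + (τ ∩ s₂).card ≤ k + (s₁ ∩ s₂).card := by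
    intro τ hτ s₁ s₂
    have hcup : (τ ∩ s₁) ∪ (τ ∩ s₂) ⊆ τ :=
      Finset.union_subset Finset.inter_subset_left Finset.inter_subset_left
    have hcap : (τ ∩ s₁) ∩ (τ ∩ s₂) ⊆ s₁ ∩ s₂ := by
      intro x hx
      simp only [Finset.mem_inter] at hx ⊢
      exact ⟨hx.1.2, hx.2.2⟩
    have h1 := Finset.card_le_card hcup
    have h2 := Finset.card_le_card hcap
    have h3 := Finset.card_inter_add_card_union (τ ∩ s₁) (τ ∩ s₂)
    omega
  -- ‖1 - G‖ < 1/4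
  have hEnorm : ‖(1 : Matrix {x // x ∈ T} {x // x ∈ T} ℝ) - G‖ < 1/4 := by
    refine lt_of_le_of_lt (b := max (((K:ℝ)-1) * (r.choose j : ℝ) / (k.choose j : ℝ)) 0)
      ?_ (max_lt hc1 (by norm_num))
    apply linfty_norm_le _ (le_max_right _ _)
    intro i
    have hterm : ∀ t, |(1 - G) i t| = if t = i then 0 else G i t := by
      intro t
      by_cases h : t = i
      · subst h; simp [Matrix.sub_apply, Matrix.one_apply, hGdiag]
      · have hne : i ≠ t := fun h' => h h'.symm
        rw [Matrix.sub_apply, Matrix.one_apply_ne hne, if_neg h, zero_sub, abs_neg,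
          abs_of_nonneg]
        rw [hGentry]; positivity
    rw [Finset.sum_congr rfl fun t _ => hterm t]
    have hre : ∀ t ∈ Finset.univ.erase i, (if t = i then (0:ℝ) else G i t) = G i t := by
      intro t ht
      rw [if_neg (Finset.ne_of_mem_erase ht)]
    have hsplit : (∑ t : {x // x ∈ T}, if t = i then (0:ℝ) else G i t)
        = ∑ t ∈ Finset.univ.erase i, (if t = i then (0:ℝ) else G i t) := by
      rw [← Finset.add_sum_erase Finset.univ _ (Finset.mem_univ i), if_pos rfl, zero_add]
    rw [hsplit, Finset.sum_congr rfl hre]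
    have hbound : ∀ t ∈ Finset.univ.erase i,
        G i t ≤ (if c t.1 = c i.1 then (r.choose j : ℝ) / (k.choose j : ℝ) else 0) := by
      intro t ht
      have htne : t ≠ i := Finset.ne_of_mem_erase ht
      have htne' : i.1 ≠ t.1 := fun h => htne (Subtype.ext h.symm)
      by_cases hcc : c t.1 = c i.1
      · rw [if_pos hcc, hGentry]
        have hr := hsame i.1 i.2 t.1 t.2 htne' hcc.symm
        have := Nat.choose_le_choose j hr
        gcongr <;> exact_mod_cast this
      · rw [if_neg hcc, hGentry]
        have hd := hdiff i.1 i.2 t.1 t.2 (fun h => hcc h.symm)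
        have hz : ((i.1.1 ∩ t.1.1).card).choose j = 0 :=
          Nat.choose_eq_zero_of_lt (by omega)
        rw [hz]
        simp
    refine le_trans (Finset.sum_le_sum hbound) ?_
    rw [← Finset.sum_filter, Finset.sum_const, nsmul_eq_mul]
    have hK1 : 1 ≤ K := by
      have : i.1 ∈ T.filter (fun τ' => c τ' = c i.1) := by
        simp [Finset.mem_filter, i.2]
      have hpos : 0 < (T.filter (fun τ' => c τ' = c i.1)).card :=
        Finset.card_pos.mpr ⟨i.1, this⟩
      exact le_trans hpos (hK _)
    have hcard : (((Finset.univ.erase i).filter fun t => c t.1 = c i.1).card : ℝ)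
        ≤ (K : ℝ) - 1 := by
      have hle : ((Finset.univ.erase i).filter fun t => c t.1 = c i.1).card
          ≤ ((T.filter fun τ' => c τ' = c i.1).erase i.1).card := by
        apply Finset.card_le_card_of_injOn (fun t => t.1)
        · intro t ht
          simp only [Finset.mem_coe, Finset.mem_filter, Finset.mem_erase, Finset.mem_univ, true_and,
            and_true] at ht
          simp only [Finset.mem_coe, Finset.mem_erase, Finset.mem_filter]
          exact ⟨fun h => ht.1 (Subtype.ext h), t.2, ht.2⟩
        · exact fun a _ b _ h => Subtype.ext h
      have hmem : i.1 ∈ T.filter (fun τ' => c τ' = c i.1) := by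
        simp [Finset.mem_filter, i.2]
      rw [Finset.card_erase_of_mem hmem] at hle
      have : ((Finset.univ.erase i).filter fun t => c t.1 = c i.1).card ≤ K - 1 := by
        have := hK (c i.1); omega
      calc (((Finset.univ.erase i).filter fun t => c t.1 = c i.1).card : ℝ)
          ≤ ((K - 1 : ℕ) : ℝ) := by exact_mod_cast this
        _ = (K : ℝ) - 1 := by
            rw [Nat.cast_sub hK1]; norm_num
    refine le_trans ?_ (le_max_left _ _)
    rw [mul_div_assoc]
    apply mul_le_mul_of_nonneg_right hcard (by positivity)
  -- invertibility
  have hGunit : IsUnit G := by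
    haveI : HasSummableGeomSeries (Matrix {x // x ∈ T} {x // x ∈ T} ℝ) :=
      @instHasSummableGeomSeriesOfCompleteSpace _ _ (by exact matCompl)
    have := isUnit_one_sub_of_norm_lt_one (x := 1 - G) (lt_of_lt_of_le hEnorm (by norm_num))
    simpa using this
  refine ⟨hGunit, ?_⟩
  have hGinv : G * G⁻¹ = 1 :=
    Matrix.mul_nonsing_inv _ ((Matrix.isUnit_iff_isUnit_det G).mp hGunit)
  -- ‖B‖ ≤ 3/4
  have hBnorm : ‖B‖ ≤ 3/4 := by
    apply linfty_norm_le _ (by norm_num)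
    intro i
    have hτT : i.1 ∉ T := by
      have := i.2; rwa [Finset.mem_compl] at this
    have habs : ∀ t : {x // x ∈ T},
        |B i t| = ((i.1.1 ∩ t.1.1).card.choose j : ℝ) / (k.choose j : ℝ) := by
      intro t; rw [hBentry]
      exact abs_of_nonneg (by positivity)
    rw [Finset.sum_congr rfl fun t _ => habs t]
    set S := Finset.univ.filter
      (fun t : {x // x ∈ T} => j ≤ (i.1.1 ∩ t.1.1).card) with hS
    have hsum : ∑ t : {x // x ∈ T}, ((i.1.1 ∩ t.1.1).card.choose j : ℝ) / (k.choose j : ℝ)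
        = ∑ t ∈ S, ((i.1.1 ∩ t.1.1).card.choose j : ℝ) / (k.choose j : ℝ) := by
      symm
      apply Finset.sum_subset (Finset.subset_univ S)
      intro t _ htS
      rw [hS, Finset.mem_filter] at htS
      push_neg at htS
      have : ((i.1.1 ∩ t.1.1).card).choose j = 0 :=
        Nat.choose_eq_zero_of_lt (htS (Finset.mem_univ t))
      rw [this]; simp
    rw [hsum]
    rcases Finset.eq_empty_or_nonempty S with hSe | ⟨t₁, ht₁⟩
    · rw [hSe]; simp; norm_num
    have hmemS : ∀ t : {x // x ∈ T}, t ∈ S ↔ j ≤ (i.1.1 ∩ t.1.1).card := by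
      intro t; rw [hS, Finset.mem_filter]; simp
    have key1 : ∀ t ∈ S, ∀ t' ∈ S, c t.1 = c t'.1 := by
      intro t ht t' ht'
      by_contra hcc
      have hd := hdiff t.1 t.2 t'.1 t'.2 hcc
      have hp := hpair i.1.1 i.1.2 t.1.1 t'.1.1
      rw [hmemS] at ht ht'
      omega
    obtain ⟨t₀, ht₀S, ht₀⟩ : ∃ t₀ ∈ S, ∀ t ∈ S.erase t₀,
        (i.1.1 ∩ t.1.1).card ≤ (k + r) / 2 := by
      by_cases hbig : ∃ t ∈ S, (k + r) / 2 < (i.1.1 ∩ t.1.1).card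
      · obtain ⟨t₀, ht₀S, ht₀b⟩ := hbig
        refine ⟨t₀, ht₀S, fun t ht => ?_⟩
        by_contra hgt
        push_neg at hgt
        have htS := Finset.mem_of_mem_erase ht
        have htne : t ≠ t₀ := Finset.ne_of_mem_erase ht
        have hcc : c t.1 = c t₀.1 := key1 t htS t₀ ht₀S
        have hr := hsame t.1 t.2 t₀.1 t₀.2 (fun h => htne (Subtype.ext h)) hcc
        have hp := hpair i.1.1 i.1.2 t.1.1 t₀.1.1
        omega
      · push_neg at hbig
        exact ⟨t₁, ht₁, fun t ht => hbig t (Finset.mem_of_mem_erase ht)⟩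
    have hK1 : 1 ≤ K := by
      have hmem : t₀.1 ∈ T.filter (fun τ' => c τ' = c t₀.1) := by
        simp [Finset.mem_filter, t₀.2]
      have hpos : 0 < (T.filter (fun τ' => c τ' = c t₀.1)).card :=
        Finset.card_pos.mpr ⟨t₀.1, hmem⟩
      exact le_trans hpos (hK _)
    have hScard : ((S.erase t₀).card : ℝ) ≤ (K : ℝ) - 1 := by
      have hcS : S.card ≤ K := by
        have hle : S.card ≤ (T.filter fun τ' => c τ' = c t₀.1).card := by
          apply Finset.card_le_card_of_injOn (fun t => t.1)
          · intro t ht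
            simp only [Finset.mem_coe, Finset.mem_filter]
            exact ⟨t.2, key1 t ht t₀ ht₀S⟩
          · exact fun a _ b _ h => Subtype.ext h
        exact hle.trans (hK _)
      have : (S.erase t₀).card ≤ K - 1 := by
        rw [Finset.card_erase_of_mem ht₀S]; omega
      calc ((S.erase t₀).card : ℝ) ≤ ((K - 1 : ℕ) : ℝ) := by exact_mod_cast this
        _ = (K : ℝ) - 1 := by rw [Nat.cast_sub hK1]; norm_num
    -- the big term is at most C(k-1,j)/C(k,j)
    have hterm₀ : ((i.1.1 ∩ t₀.1.1).card.choose j : ℝ) / (k.choose j : ℝ)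
        ≤ ((k-1).choose j : ℝ) / (k.choose j : ℝ) := by
      have hne : i.1.1 ≠ t₀.1.1 := by
        intro h
        exact hτT (by rw [show i.1 = t₀.1 from Subtype.ext h]; exact t₀.2)
      have h2 : (i.1.1 ∩ t₀.1.1).card ≤ k := by
        calc (i.1.1 ∩ t₀.1.1).card ≤ i.1.1.card :=
            Finset.card_le_card Finset.inter_subset_left
          _ = k := i.1.2
      have h3 : (i.1.1 ∩ t₀.1.1).card ≠ k := by
        intro hcardeq
        have hsubeq : i.1.1 ∩ t₀.1.1 = i.1.1 :=
          Finset.eq_of_subset_of_card_le Finset.inter_subset_left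
            (by rw [hcardeq, i.1.2])
        have hsub2 : i.1.1 ⊆ t₀.1.1 := by
          rw [← hsubeq]; exact Finset.inter_subset_right
        exact hne (Finset.eq_of_subset_of_card_le hsub2 (by rw [i.1.2, t₀.1.2]))
      have hle : (i.1.1 ∩ t₀.1.1).card ≤ k - 1 := by omega
      have := Nat.choose_le_choose j hle
      gcongr <;> exact_mod_cast this
    have hrest : ∑ t ∈ S.erase t₀, ((i.1.1 ∩ t.1.1).card.choose j : ℝ) / (k.choose j : ℝ)
        ≤ ((K : ℝ) - 1) * ((((k + r) / 2).choose j : ℝ) / (k.choose j : ℝ)) := by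
      calc ∑ t ∈ S.erase t₀, ((i.1.1 ∩ t.1.1).card.choose j : ℝ) / (k.choose j : ℝ)
          ≤ ∑ _t ∈ S.erase t₀, ((((k + r) / 2).choose j : ℝ) / (k.choose j : ℝ)) := by
            apply Finset.sum_le_sum
            intro t ht
            have := Nat.choose_le_choose j (ht₀ t ht)
            gcongr <;> exact_mod_cast this
        _ = ((S.erase t₀).card : ℝ) * ((((k + r) / 2).choose j : ℝ) / (k.choose j : ℝ)) := by
            rw [Finset.sum_const, nsmul_eq_mul]
        _ ≤ ((K : ℝ) - 1) * ((((k + r) / 2).choose j : ℝ) / (k.choose j : ℝ)) := by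
            apply mul_le_mul_of_nonneg_right hScard (by positivity)
    have hc2' : ((k-1).choose j : ℝ) / (k.choose j : ℝ)
        + ((K : ℝ) - 1) * ((((k + r) / 2).choose j : ℝ) / (k.choose j : ℝ)) ≤ 3/4 := by
      rw [← mul_div_assoc, ← add_div]
      exact hc2
    rw [← Finset.add_sum_erase S _ ht₀S]
    linarith
  -- ‖1‖ ≤ 1
  have hone : ‖(1 : Matrix {x // x ∈ T} {x // x ∈ T} ℝ)‖ ≤ 1 := by
    apply linfty_norm_le _ zero_le_one
    intro i
    have hterm : ∀ t, |(1 : Matrix {x // x ∈ T} {x // x ∈ T} ℝ) i t|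
        = if i = t then (1:ℝ) else 0 := by
      intro t; by_cases h : i = t <;> simp [Matrix.one_apply, h]
    rw [Finset.sum_congr rfl fun t _ => hterm t, Finset.sum_ite_eq]
    simp
  -- bound on ‖G⁻¹‖
  have hsubmul : (1 - G) * G⁻¹ = G⁻¹ - 1 := by
    rw [sub_mul, one_mul, hGinv]
  have hN : ‖G⁻¹‖ ≤ 1 + ‖(1 : Matrix {x // x ∈ T} {x // x ∈ T} ℝ) - G‖ * ‖G⁻¹‖ := by
    have heq : G⁻¹ = 1 + ((1 - G) * G⁻¹) := by rw [hsubmul]; abel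
    calc ‖G⁻¹‖ = ‖(1 : Matrix {x // x ∈ T} {x // x ∈ T} ℝ) + ((1 - G) * G⁻¹)‖ := by
          rw [← heq]
      _ ≤ ‖(1 : Matrix {x // x ∈ T} {x // x ∈ T} ℝ)‖ + ‖(1 - G) * G⁻¹‖ := norm_add_le _ _
      _ ≤ 1 + ‖(1 : Matrix {x // x ∈ T} {x // x ∈ T} ℝ) - G‖ * ‖G⁻¹‖ := by
          gcongr
          exact norm_mul_le _ _
  have hNlt : ‖G⁻¹‖ < 4/3 := by
    by_contra hcon
    push_neg at hcon
    nlinarith [hEnorm, hN, norm_nonneg ((1 : Matrix {x // x ∈ T} {x // x ∈ T} ℝ) - G),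
      norm_nonneg G⁻¹]
  calc matInfNorm (B * G⁻¹) ≤ ‖B * G⁻¹‖ := matInfNorm_le_norm _
    _ ≤ ‖B‖ * ‖G⁻¹‖ := Matrix.linfty_opNorm_mul _ _
    _ ≤ (3/4) * ‖G⁻¹‖ := mul_le_mul_of_nonneg_right hBnorm (norm_nonneg _)
    _ < (3/4) * (4/3) := by
        apply mul_lt_mul_of_pos_left hNlt
        norm_num
    _ = 1 := by norm_num
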